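/- Under the hypotheses of the Lie-algebra characterization of Tr-IMM: if μ_1 and μ_2 are path monomials differing only in the shared middle index between positions k and k+1 (μ_1 uses i_{k+1}, μ_2 uses i'_{k+1}, with all other indices equal), then their coefficients in f are equal. -/

import Mathlib

open Matrix MvPolynomial

/-- The `k`-th symbolic matrix `Q_k` of `Tr-IMM_{w,d}`. -/
noncomputable def symQ (F : Type*) [Field F] (w d : ℕ) (k : Fin d) :
    Matrix (Fin w) (Fin w) (MvPolynomial (Fin d × Fin w × Fin w) F) :=
  fun i j => MvPolynomial.X (k, i, j)

/-- `Tr-IMM_{w,d} = tr(Q_0 Q_1 ⋯ Q_{d-1})`. -/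
noncomputable def trIMM (F : Type*) [Field F] (w d : ℕ) :
    MvPolynomial (Fin d × Fin w × Fin w) F :=
  Matrix.trace (((List.finRange d).map (symQ F w d)).prod)

/-- The Lie algebra of a polynomial `f`. -/
def lieAlg {F : Type*} [Field F] {σ : Type*} [Fintype σ] [DecidableEq σ]
    (f : MvPolynomial σ F) : Set (Matrix σ σ F) :=
  {E | ∑ i : σ, ∑ j : σ, E i j • (MvPolynomial.X j * MvPolynomial.pderiv i f) = 0}

/-- The block-diagonal matrix of the space `B_k` associated to `M ∈ M_w(F)`:
the row indexed by `x^{(k)}_{i,j}` carries the linear form `(Q_k · M)_{i,j}` and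
the row indexed by `x^{(k+1)}_{i,j}` carries `(−M · Q_{k+1})_{i,j}` (this is the
coordinate form of `diag(I_w ⊗ Mᵀ, −I_w ⊗ M)` and its variants under the
paper's variable ordering). -/
def Bmat (F : Type*) [Field F] (w d : ℕ) [NeZero d] (k : Fin d)
    (M : Matrix (Fin w) (Fin w) F) :
    Matrix (Fin d × Fin w × Fin w) (Fin d × Fin w × Fin w) F :=
  fun a b =>
    if a.1 = k ∧ b.1 = k then (if a.2.1 = b.2.1 then M b.2.2 a.2.2 else 0)
    else if a.1 = k + 1 ∧ b.1 = k + 1 then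
      (if a.2.2 = b.2.2 then - M a.2.1 b.2.1 else 0)
    else 0



/-- Path monomial exponent vector associated to an edge-labelling `g`. -/
noncomputable def pathMon {w d : ℕ} (g : Fin d → Fin w × Fin w) : (Fin d × Fin w × Fin w) →₀ ℕ :=
  ∑ l : Fin d, Finsupp.single ((l, g l) : Fin d × Fin w × Fin w) 1

lemma pathMon_apply {w d : ℕ} (g : Fin d → Fin w × Fin w) (l : Fin d) (y : Fin w × Fin w) :
    pathMon g (l, y) = if y = g l then 1 else 0 := by
  rw [pathMon, Finset.sum_apply']
  rw [Finset.sum_eq_single l]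
  · simp [Finsupp.single_apply, Prod.ext_iff, eq_comm]
  · intro b _ hb
    simp only [Finsupp.single_apply, Prod.mk.injEq, ite_eq_right_iff, and_imp]
    intro h
    exact absurd h hb
  · simp

/-- Exchanging the `t`-th edge of a path monomial. -/
lemma pathMon_exchange {w d : ℕ} (g g' : Fin d → Fin w × Fin w) (t : Fin d)
    (hgg : ∀ l : Fin d, l ≠ t → g l = g' l) :
    pathMon g - Finsupp.single ((t, g t) : Fin d × Fin w × Fin w) 1
      + Finsupp.single ((t, g' t) : Fin d × Fin w × Fin w) 1 = pathMon g' := by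
  ext x
  obtain ⟨l, y⟩ := x
  rw [Finsupp.add_apply, Finsupp.tsub_apply, pathMon_apply, pathMon_apply,
    Finsupp.single_apply, Finsupp.single_apply]
  by_cases hl : l = t
  · subst hl
    simp only [Prod.mk.injEq, true_and]
    by_cases h1 : y = g l <;> by_cases h2 : y = g' l <;>
      simp [h1, h2, eq_comm] <;> omega
  · have e1 : (if ((t, g t) : Fin d × Fin w × Fin w) = (l, y) then (1 : ℕ) else 0) = 0 :=
      if_neg (fun h => hl (congrArg Prod.fst h).symm)
    have e2 : (if ((t, g' t) : Fin d × Fin w × Fin w) = (l, y) then (1 : ℕ) else 0) = 0 :=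
      if_neg (fun h => hl (congrArg Prod.fst h).symm)
    rw [e1, e2, hgg l hl]
    omega

def gOrig {w d : ℕ} [NeZero d] (idx : Fin d → Fin w) : Fin d → Fin w × Fin w :=
  fun l => (idx l, idx (l + 1))

lemma coeff_pderiv'' {σ : Type*} [DecidableEq σ] {R : Type*} [CommSemiring R]
    (a : σ) (f : MvPolynomial σ R) (m : σ →₀ ℕ) :
    coeff m (pderiv a f) = (m a + 1) * coeff (m + Finsupp.single a 1) f := by
  induction f using MvPolynomial.induction_on' with
  | monomial u r =>
    rw [pderiv_monomial]
    simp only [coeff_monomial]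
    by_cases h : u = m + Finsupp.single a 1
    · subst h
      rw [if_pos (add_tsub_cancel_right _ _), if_pos rfl]
      simp [mul_comm]
    · rw [if_neg h]
      split_ifs with h2
      · rcases Nat.eq_zero_or_pos (u a) with h3 | h3
        · simp [h3]
        · exfalso
          apply h
          have : Finsupp.single a 1 ≤ u := by rwa [Finsupp.single_le_iff]
          rw [← h2, tsub_add_cancel_of_le this]
      · ring
  | add p q hp hq => simp [hp, hq, mul_add]

lemma key_term (F : Type*) [Field F] (w d : ℕ) [NeZero d] (k : Fin d)
    (idx : Fin d → Fin w) (i' : Fin w)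
    (hk1 : k + 1 ≠ k) (hk2 : k + 1 + 1 ≠ k + 1) (hi : i' ≠ idx (k + 1))
    (f : MvPolynomial (Fin d × Fin w × Fin w) F) (a b : Fin d × Fin w × Fin w) :
    Bmat F w d k (Matrix.single (idx (k + 1)) i' 1) a b *
        coeff (pathMon (fun l => if l = k + 1 then (i', idx (k + 1 + 1))
          else gOrig idx l)) (X b * pderiv a f) =
      (if a = ((k, idx k, i') : Fin d × Fin w × Fin w) ∧
          b = ((k, idx k, idx (k + 1)) : Fin d × Fin w × Fin w)
        then coeff (pathMon (gOrig (Function.update idx (k + 1) i'))) f else 0) +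
      (if a = ((k + 1, idx (k + 1), idx (k + 1 + 1)) : Fin d × Fin w × Fin w) ∧
          b = ((k + 1, i', idx (k + 1 + 1)) : Fin d × Fin w × Fin w)
        then -(coeff (pathMon (gOrig idx)) f) else 0) := by
  set g3 : Fin d → Fin w × Fin w :=
    fun l => if l = k + 1 then (i', idx (k + 1 + 1)) else gOrig idx l with hg3
  have hg3k : g3 k = (idx k, idx (k + 1)) := by simp [hg3, hk1.symm, gOrig]
  have hg3k1 : g3 (k + 1) = (i', idx (k + 1 + 1)) := by simp [hg3]
  have hνu1 : pathMon g3 ((k, idx k, idx (k + 1)) : Fin d × Fin w × Fin w) = 1 := by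
    rw [show ((k, idx k, idx (k + 1)) : Fin d × Fin w × Fin w) =
      ((k, (idx k, idx (k + 1))) : Fin d × Fin w × Fin w) from rfl, pathMon_apply, hg3k,
      if_pos rfl]
  have hνu2 : pathMon g3 ((k, idx k, i') : Fin d × Fin w × Fin w) = 0 := by
    rw [show ((k, idx k, i') : Fin d × Fin w × Fin w) =
      ((k, (idx k, i')) : Fin d × Fin w × Fin w) from rfl, pathMon_apply, hg3k, if_neg]
    simp [Prod.ext_iff, hi]
  have hνv2 : pathMon g3 ((k + 1, i', idx (k + 1 + 1)) : Fin d × Fin w × Fin w) = 1 := by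
    rw [show ((k + 1, i', idx (k + 1 + 1)) : Fin d × Fin w × Fin w) =
      ((k + 1, (i', idx (k + 1 + 1))) : Fin d × Fin w × Fin w) from rfl, pathMon_apply,
      hg3k1, if_pos rfl]
  have hνv1 : pathMon g3 ((k + 1, idx (k + 1), idx (k + 1 + 1)) :
      Fin d × Fin w × Fin w) = 0 := by
    rw [show ((k + 1, idx (k + 1), idx (k + 1 + 1)) : Fin d × Fin w × Fin w) =
      ((k + 1, (idx (k + 1), idx (k + 1 + 1))) : Fin d × Fin w × Fin w) from rfl,
      pathMon_apply, hg3k1, if_neg]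
    simp only [Prod.mk.injEq, not_and]
    intro h
    exact absurd h.symm hi
  have Hμ2 : pathMon g3 - Finsupp.single ((k, idx k, idx (k + 1)) :
        Fin d × Fin w × Fin w) 1 + Finsupp.single ((k, idx k, i') :
        Fin d × Fin w × Fin w) 1 = pathMon (gOrig (Function.update idx (k + 1) i')) := by
    have := pathMon_exchange g3 (gOrig (Function.update idx (k + 1) i')) k ?_
    · rw [hg3k] at this
      rw [show gOrig (Function.update idx (k + 1) i') k = (idx k, i') by
        simp [gOrig, Function.update_of_ne (Ne.symm hk1), Function.update_self]] at this
      exact this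
    · intro l hl
      by_cases h2 : l = k + 1
      · subst h2
        rw [hg3k1]
        simp [gOrig, Function.update_self, Function.update_of_ne hk2]
      · have : l + 1 ≠ k + 1 := fun h => hl (add_right_cancel h)
        simp [hg3, h2, gOrig, Function.update_of_ne h2, Function.update_of_ne this]
  have Hμ1 : pathMon g3 - Finsupp.single ((k + 1, i', idx (k + 1 + 1)) :
        Fin d × Fin w × Fin w) 1 + Finsupp.single ((k + 1, idx (k + 1), idx (k + 1 + 1)) :
        Fin d × Fin w × Fin w) 1 = pathMon (gOrig idx) := by
    have := pathMon_exchange g3 (gOrig idx) (k + 1) ?_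
    · rw [hg3k1] at this
      exact this
    · intro l hl
      simp [hg3, hl, gOrig]
  obtain ⟨la, ia, ja⟩ := a
  obtain ⟨lb, ib, jb⟩ := b
  simp only [Bmat, Matrix.single, Matrix.of_apply]
  by_cases hA : la = k ∧ lb = k
  · have hla : k = la := hA.1.symm
    subst hla
    have hlb : k = lb := hA.2.symm
    subst hlb
    rw [if_pos ⟨rfl, rfl⟩]
    by_cases h1 : ia = ib
    · subst h1
      by_cases h2 : idx (k + 1) = jb ∧ i' = ja
      · obtain ⟨h2a, h2b⟩ := h2
        subst h2a
        subst h2b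
        rw [if_pos rfl, if_pos ⟨rfl, rfl⟩]
        by_cases h3 : ia = idx k
        · subst h3
          rw [coeff_X_mul', if_pos]
          · rw [coeff_pderiv'', Finsupp.tsub_apply, hνu2, Nat.zero_sub, Hμ2]
            rw [if_pos ⟨rfl, rfl⟩, if_neg]
            · ring
            · rintro ⟨h, -⟩
              exact hk1 (congrArg Prod.fst h).symm
          · rw [Finsupp.mem_support_iff, hνu1]
            exact one_ne_zero
        · have hb0' : pathMon g3 ((k, ia, idx (k + 1)) : Fin d × Fin w × Fin w) = 0 := by
            rw [show ((k, ia, idx (k + 1)) : Fin d × Fin w × Fin w) =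
              ((k, (ia, idx (k + 1))) : Fin d × Fin w × Fin w) from rfl, pathMon_apply,
              hg3k, if_neg]
            simp [Prod.ext_iff, h3]
          rw [coeff_X_mul', if_neg, mul_zero, if_neg, if_neg]
          · ring
          · rintro ⟨h, -⟩
            exact hk1 (congrArg Prod.fst h).symm
          · rintro ⟨h, -⟩
            exact h3 (congrArg (fun x => x.2.1) h)
          · rw [Finsupp.mem_support_iff]
            simp [hb0']
      · rw [if_pos rfl, if_neg h2, zero_mul, if_neg, if_neg]
        · ring
        · rintro ⟨h, -⟩
          exact hk1 (congrArg Prod.fst h).symm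
        · rintro ⟨ha, hb⟩
          exact h2 ⟨(congrArg (fun x => x.2.2) hb).symm, (congrArg (fun x => x.2.2) ha).symm⟩
    · rw [if_neg h1, zero_mul, if_neg, if_neg]
      · ring
      · rintro ⟨h, -⟩
        exact hk1 (congrArg Prod.fst h).symm
      · rintro ⟨ha, hb⟩
        exact h1 ((congrArg (fun x => x.2.1) ha).trans (congrArg (fun x => x.2.1) hb).symm)
  · rw [if_neg hA]
    by_cases hBc : la = k + 1 ∧ lb = k + 1
    · obtain ⟨rfl, hlb⟩ := hBc
      subst hlb
      rw [if_pos ⟨rfl, rfl⟩]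
      by_cases h1 : ja = jb
      · subst h1
        by_cases h2 : idx (k + 1) = ia ∧ i' = ib
        · obtain ⟨h2a, h2b⟩ := h2
          subst h2a
          subst h2b
          rw [if_pos rfl, if_pos ⟨rfl, rfl⟩]
          by_cases h3 : ja = idx (k + 1 + 1)
          · subst h3
            rw [coeff_X_mul', if_pos]
            · rw [coeff_pderiv'', Finsupp.tsub_apply, hνv1, Nat.zero_sub, Hμ1]
              rw [if_neg, if_pos ⟨rfl, rfl⟩]
              · ring
              · rintro ⟨h, -⟩
                exact hk1 (congrArg Prod.fst h)
            · rw [Finsupp.mem_support_iff, hνv2]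
              exact one_ne_zero
          · have hb0' : pathMon g3 ((k + 1, i', ja) : Fin d × Fin w × Fin w) = 0 := by
              rw [show ((k + 1, i', ja) : Fin d × Fin w × Fin w) =
                ((k + 1, (i', ja)) : Fin d × Fin w × Fin w) from rfl, pathMon_apply,
                hg3k1, if_neg]
              simp [Prod.ext_iff, h3]
            rw [coeff_X_mul', if_neg, mul_zero, if_neg, if_neg]
            · ring
            · rintro ⟨h, -⟩
              exact h3 (congrArg (fun x => x.2.2) h)
            · rintro ⟨h, -⟩
              exact hk1 (congrArg Prod.fst h)
            · rw [Finsupp.mem_support_iff]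
              simp [hb0']
        · rw [if_pos rfl, if_neg h2, neg_zero, zero_mul, if_neg, if_neg]
          · ring
          · rintro ⟨ha, hb⟩
            exact h2 ⟨(congrArg (fun x => x.2.1) ha).symm,
              (congrArg (fun x => x.2.1) hb).symm⟩
          · rintro ⟨h, -⟩
            exact hk1 (congrArg Prod.fst h)
      · rw [if_neg h1, zero_mul, if_neg, if_neg]
        · ring
        · rintro ⟨ha, hb⟩
          exact h1 ((congrArg (fun x => x.2.2) ha).trans (congrArg (fun x => x.2.2) hb).symm)
        · rintro ⟨h, -⟩
          exact hk1 (congrArg Prod.fst h)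
    · rw [if_neg hBc, zero_mul, if_neg, if_neg]
      · ring
      · rintro ⟨ha, hb⟩
        exact hBc ⟨congrArg Prod.fst ha, congrArg Prod.fst hb⟩
      · rintro ⟨ha, hb⟩
        exact hA ⟨congrArg Prod.fst ha, congrArg Prod.fst hb⟩

lemma fin_succ_ne' {d : ℕ} [NeZero d] (hd : 3 ≤ d) (k : Fin d) : k + 1 ≠ k := by
  intro h
  have h1 : (1 : Fin d) = 0 := by
    have := congrArg (· - k) h
    simpa [add_comm, add_sub_cancel_right] using this
  have h2 := congrArg Fin.val h1
  rw [Fin.val_one'] at h2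
  simp at h2
  omega

theorem stmt17 (F : Type*) [Field F] (w d : ℕ) [NeZero d] (hw : 2 ≤ w) (hd : 3 ≤ d)
    (f : MvPolynomial (Fin d × Fin w × Fin w) F) (hf0 : f ≠ 0)
    (hsm : ∀ m ∈ f.support, ∀ k : Fin d,
      (∑ i : Fin w, ∑ j : Fin w, m (k, i, j)) = 1)
    (hB : ∀ (k : Fin d) (M : Matrix (Fin w) (Fin w) F),
      Bmat F w d k M ∈ lieAlg f)
    (k : Fin d) (idx : Fin d → Fin w) (i' : Fin w) :
    MvPolynomial.coeff
        (∑ l : Fin d,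
          Finsupp.single ((l, idx l, idx (l + 1)) : Fin d × Fin w × Fin w) 1) f =
      MvPolynomial.coeff
        (∑ l : Fin d,
          Finsupp.single
            ((l, Function.update idx (k + 1) i' l,
              Function.update idx (k + 1) i' (l + 1)) : Fin d × Fin w × Fin w) 1) f := by
  classical
  by_cases hi : i' = idx (k + 1)
  · simp [hi, Function.update_eq_self]
  have hk1 : k + 1 ≠ k := fin_succ_ne' hd k
  have hk2 : k + 1 + 1 ≠ k + 1 := fin_succ_ne' hd (k + 1)
  show coeff (pathMon (gOrig idx)) f =
    coeff (pathMon (gOrig (Function.update idx (k + 1) i'))) f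
  have hE := hB k (Matrix.single (idx (k + 1)) i' 1)
  simp only [lieAlg, Set.mem_setOf_eq] at hE
  have h0 : (0 : F) =
      ∑ a : Fin d × Fin w × Fin w, ∑ b : Fin d × Fin w × Fin w,
        Bmat F w d k (Matrix.single (idx (k + 1)) i' 1) a b *
          coeff (pathMon (fun l => if l = k + 1 then (i', idx (k + 1 + 1))
            else gOrig idx l)) (X b * pderiv a f) := by
    have h' := congrArg (coeff (pathMon (fun l => if l = k + 1 then (i', idx (k + 1 + 1))
      else gOrig idx l))) hE
    rw [coeff_sum] at h'
    simp only [coeff_sum, coeff_smul, smul_eq_mul, coeff_zero] at h'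
    exact h'.symm
  rw [Finset.sum_congr rfl (fun a _ => Finset.sum_congr rfl
    (fun b _ => key_term F w d k idx i' hk1 hk2 hi f a b))] at h0
  simp only [Finset.sum_add_distrib, ite_and] at h0
  rw [Finset.sum_comm] at h0
  simp only [Finset.sum_ite_irrel, Finset.sum_const_zero, Finset.sum_ite_eq',
    Finset.mem_univ, if_true] at h0
  linear_combination h0
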